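/- Suppose {μ_y : y ∈ Y} is a σ-finite disintegration of the σ-finite measure μ with respect to (ν, φ). Then there exists a uniformly σ-finite disintegration {μ̂_y : y ∈ Y} of μ with respect to (ν, φ) such that μ_y = μ̂_y for ν-almost every y ∈ Y. -/

import Mathlib

open MeasureTheory

/-- If `{μy y}` is a σ-finite disintegration of the σ-finite measure `μ` with respect to
`(ν, φ)`, then there is a uniformly σ-finite disintegration `{μ̂ y}` of `μ` with respect to
`(ν, φ)` which agrees with `{μy y}` for `ν`-almost every `y`. -/
theorem exists_uniformly_sigmaFinite_disintegration_ae_eq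
    {X Y : Type*} [MeasurableSpace X] [MeasurableSpace Y]
    [StandardBorelSpace X] [StandardBorelSpace Y]
    (φ : X → Y) (hφ : Measurable φ)
    (μ : Measure X) (ν : Measure Y) [SigmaFinite μ] [SigmaFinite ν]
    (μy : Y → Measure X)
    (hmeas : ∀ B : Set X, MeasurableSet B → Measurable fun y => μy y B)
    (hconc : ∀ y : Y, μy y ((φ ⁻¹' {y})ᶜ) = 0)
    (hint : ∀ B : Set X, MeasurableSet B → μ B = ∫⁻ y, μy y B ∂ν)
    (hsf : ∀ y : Y, SigmaFinite (μy y)) :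
    ∃ μhat : Y → Measure X,
      (∀ B : Set X, MeasurableSet B → Measurable fun y => μhat y B) ∧
      (∀ y : Y, μhat y ((φ ⁻¹' {y})ᶜ) = 0) ∧
      (∀ B : Set X, MeasurableSet B → μ B = ∫⁻ y, μhat y B ∂ν) ∧
      (∀ y : Y, SigmaFinite (μhat y)) ∧
      (∃ B : ℕ → Set X, (∀ n, MeasurableSet (B n)) ∧
        (∀ n, ∀ y : Y, μhat y (B n) < ⊤) ∧
        (∀ y : Y, μhat y ((⋃ n, B n)ᶜ) = 0)) ∧
      (∀ᵐ y ∂ν, μhat y = μy y) := by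
  classical
  set A : ℕ → Set X := spanningSets μ with hA
  set N : Set Y := ⋃ n, {y | μy y (A n) = ⊤} with hNdef
  have hNn : ∀ n, MeasurableSet {y | μy y (A n) = ⊤} := fun n =>
    (hmeas (A n) (measurableSet_spanningSets μ n)) (measurableSet_singleton ⊤)
  have hNmeas : MeasurableSet N := MeasurableSet.iUnion hNn
  have hNnull : ν N = 0 := by
    refine measure_iUnion_null fun n => ?_
    have hfin : ∫⁻ y, μy y (A n) ∂ν ≠ ⊤ := by
      rw [← hint (A n) (measurableSet_spanningSets μ n)]
      exact (measure_spanningSets_lt_top μ n).ne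
    have := ae_lt_top (hmeas (A n) (measurableSet_spanningSets μ n)) hfin
    rw [ae_iff] at this
    simpa [not_lt, top_le_iff] using this
  refine ⟨fun y => if y ∈ N then 0 else μy y, ?_, ?_, ?_, ?_, ?_, ?_⟩
  · intro B hB
    simp only [Measure.coe_zero, Pi.zero_apply, apply_ite (fun m : Measure X => m B),
      Measure.coe_zero, Pi.zero_apply]
    exact Measurable.ite hNmeas measurable_const (hmeas B hB)
  · intro y
    by_cases hy : y ∈ N <;> simp [hy, hconc y]
  · intro B hB
    rw [hint B hB]
    refine lintegral_congr_ae ?_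
    filter_upwards [measure_eq_zero_iff_ae_notMem.mp hNnull] with y hy
    simp [hy]
  · intro y
    by_cases hy : y ∈ N <;> simp only [hy, if_true, if_false]
    · infer_instance
    · exact hsf y
  · refine ⟨A, fun n => measurableSet_spanningSets μ n, ?_, ?_⟩
    · intro n y
      by_cases hy : y ∈ N
      · simp [hy]
      · simp only [hy, if_false]
        rw [hNdef, Set.mem_iUnion] at hy
        push_neg at hy
        exact lt_top_iff_ne_top.mpr (hy n)
    · intro y
      simp [hA, iUnion_spanningSets]
  · filter_upwards [measure_eq_zero_iff_ae_notMem.mp hNnull] with y hy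
    simp [hy]
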